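/- arXiv:2305.18903 — 3 statements merged into one kernel-verified Lean document; each statement's English description precedes it below -/
import Mathlib

section
/- Let P₀ = (S, A, p, r) be a finite MDP with discount γ ∈ [0,1), and let Ω_β ⊆ S be such that some optimal policy of P₀, once in Ω_β, never leaves Ω_β. Define the restricted MDP P_β on state set Ω_β ∪ S_add, where S_add is the set of states outside Ω_β reachable in one step from Ω_β, transitions inside Ω_β agree with P₀, states in S_add are absorbing with zero reward, and any transition from Ω_β into S_add receives reward −M for a sufficiently large penalty M (exceeding (max|r| + γ·sup|v₀*|)/(1−γ) plus sup v₀* − inf v₀*). Then the optimal value function of P_β agrees with the optimal value function of P₀ on Ω_β: v_β*(s) = v₀*(s) for all s ∈ Ω_β. -/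
open Finset

/-- A finite Markov Decision Process. -/
structure MDP (S A : Type) [Fintype S] where
  act : S → Finset A
  act_nonempty : ∀ s, (act s).Nonempty
  p : S → A → S → ℝ
  p_nonneg : ∀ s a s', 0 ≤ p s a s'
  p_sum_one : ∀ s a, ∑ s', p s a s' = 1
  r : S → A → S → ℝ

variable {S A : Type} [Fintype S]

/-- State-action value of a function `v`. -/
def MDP.Q (M : MDP S A) (γ : ℝ) (v : S → ℝ) (s : S) (a : A) : ℝ :=
  ∑ s', M.p s a s' * (M.r s a s' + γ * v s')

/-- Bellman optimality operator. -/
def MDP.T (M : MDP S A) (γ : ℝ) (v : S → ℝ) (s : S) : ℝ :=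
  (M.act s).sup' (M.act_nonempty s) (M.Q γ v s)

/-- Policy evaluation operator. -/
def MDP.Tpi (M : MDP S A) (γ : ℝ) (π : S → A) (v : S → ℝ) (s : S) : ℝ :=
  M.Q γ v s (π s)

/-- `π` is a policy of `M`. -/
def MDP.IsPolicy (M : MDP S A) (π : S → A) : Prop := ∀ s, π s ∈ M.act s

/-- the optimal value function of the restriction of an MDP to a
region `Ωβ` that is closed under an optimal policy (with absorbing zero-reward
boundary states and a sufficiently large exit penalty `M`) agrees with the
optimal value function of the original MDP on `Ωβ`. -/
theorem restriction_value_agrees_beta [Fintype A] [Nonempty S] [Nonempty A]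
    (M0 : MDP S A) (γ : ℝ) (hγ0 : 0 ≤ γ) (hγ1 : γ < 1)
    (v0 : S → ℝ) (hv0 : ∀ s, v0 s = M0.T γ v0 s)
    (Ωβ : Finset S)
    -- an optimal policy of the original MDP, closed on Ωβ
    (πstar : S → A) (hπ : M0.IsPolicy πstar)
    (hopt : ∀ s, v0 s = M0.Q γ v0 s (πstar s))
    (hclosed : ∀ s ∈ Ωβ, ∀ s' ∉ Ωβ, M0.p s (πstar s) s' = 0)
    -- from every state of Ωβ some policy stays in Ωβ
    (hstay : ∃ σ : S → A, M0.IsPolicy σ ∧ ∀ s ∈ Ωβ, ∀ s' ∉ Ωβ, M0.p s (σ s) s' = 0)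
    -- a sufficiently large penalty
    (M : ℝ)
    (hM : (univ.sup' univ_nonempty (fun x : S × A × S => |M0.r x.1 x.2.1 x.2.2|) +
             γ * univ.sup' univ_nonempty (fun s => |v0 s|)) / (1 - γ) +
            univ.sup' univ_nonempty v0 - univ.inf' univ_nonempty v0 < M)
    -- the restricted MDP Pβ
    (Pβ : MDP S A)
    (hact : ∀ s, Pβ.act s = M0.act s)
    (hp_in : ∀ s ∈ Ωβ, ∀ (a : A) (s' : S), Pβ.p s a s' = M0.p s a s')
    (hp_abs : ∀ s ∉ Ωβ, ∀ a : A, Pβ.p s a s = 1)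
    (hr_in : ∀ s ∈ Ωβ, ∀ a : A, ∀ s' ∈ Ωβ, Pβ.r s a s' = M0.r s a s')
    (hr_exit : ∀ s ∈ Ωβ, ∀ a : A, ∀ s' ∉ Ωβ, Pβ.r s a s' = M0.r s a s' - M)
    (hr_abs : ∀ s ∉ Ωβ, ∀ (a : A) (s' : S), Pβ.r s a s' = 0)
    (vβ : S → ℝ) (hvβ : ∀ s, vβ s = Pβ.T γ vβ s) :
    ∀ s ∈ Ωβ, vβ s = v0 s := by
  classical
  have hγpos : (0:ℝ) < 1 - γ := by linarith
  -- vβ vanishes outside Ωβ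
  have hvβ0 : ∀ s ∉ Ωβ, vβ s = 0 := by
    intro s hs
    have hp0 : ∀ a : A, ∀ s', s' ≠ s → Pβ.p s a s' = 0 := by
      intro a s' hne'
      have hsum := Pβ.p_sum_one s a
      have h1 := hp_abs s hs a
      have hadd := Finset.add_sum_erase univ (Pβ.p s a) (mem_univ s)
      have hz : ∑ x ∈ univ.erase s, Pβ.p s a x = 0 := by linarith
      exact (Finset.sum_eq_zero_iff_of_nonneg
        (fun x _ => Pβ.p_nonneg s a x)).mp hz s'
        (Finset.mem_erase.mpr ⟨hne', mem_univ _⟩)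
    have hQ : ∀ a ∈ Pβ.act s, Pβ.Q γ vβ s a = γ * vβ s := by
      intro a _
      unfold MDP.Q
      rw [Finset.sum_eq_single s]
      · rw [hp_abs s hs a, hr_abs s hs a s]; ring
      · intro b _ hb; rw [hp0 a b hb]; ring
      · intro h; exact absurd (mem_univ s) h
    have hT : Pβ.T γ vβ s = γ * vβ s := by
      unfold MDP.T
      rw [Finset.sup'_congr (Pβ.act_nonempty s) rfl hQ, Finset.sup'_const]
    have := hvβ s
    rw [hT] at this
    nlinarith
  intro s0 hs0
  have hne : Ωβ.Nonempty := ⟨s0, hs0⟩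
  -- Direction 1 : v0 ≤ vβ on Ωβ
  have dir1 : ∀ s ∈ Ωβ, v0 s ≤ vβ s := by
    set δ := Ωβ.sup' hne (fun s => v0 s - vβ s) with hδdef
    obtain ⟨s₁, hs₁, hs₁eq⟩ := Finset.exists_mem_eq_sup' hne (fun s => v0 s - vβ s)
    have key : M0.Q γ v0 s₁ (πstar s₁) - Pβ.Q γ vβ s₁ (πstar s₁) ≤ γ * δ := by
      unfold MDP.Q
      rw [← Finset.sum_sub_distrib]
      have hsum : γ * δ = ∑ s', M0.p s₁ (πstar s₁) s' * (γ * δ) := by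
        rw [← Finset.sum_mul, M0.p_sum_one, one_mul]
      rw [hsum]
      apply Finset.sum_le_sum
      intro s' _
      rw [hp_in s₁ hs₁]
      by_cases h' : s' ∈ Ωβ
      · rw [hr_in s₁ hs₁ _ s' h']
        have hb : v0 s' - vβ s' ≤ δ := Finset.le_sup' (fun s => v0 s - vβ s) h'
        have hp := M0.p_nonneg s₁ (πstar s₁) s'
        nlinarith [mul_le_mul_of_nonneg_left hb (mul_nonneg hp hγ0)]
      · rw [hclosed s₁ hs₁ s' h']; simp
    have hle : Pβ.Q γ vβ s₁ (πstar s₁) ≤ vβ s₁ := by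
      have hmem : πstar s₁ ∈ Pβ.act s₁ := by rw [hact]; exact hπ s₁
      have := Finset.le_sup' (Pβ.Q γ vβ s₁) hmem
      rw [hvβ s₁]; exact this
    have h0 := hopt s₁
    have hδle : δ ≤ γ * δ := by
      have : v0 s₁ - vβ s₁ ≤ γ * δ := by linarith
      rw [← hs₁eq] at this; exact this
    have hδ0 : δ ≤ 0 := by nlinarith
    intro s hs
    have : v0 s - vβ s ≤ δ := Finset.le_sup' (fun s => v0 s - vβ s) hs
    linarith
  -- penalty positivity
  have hMpos : ∀ s' : S, 0 < M + γ * v0 s' := by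
    intro s'
    set R := univ.sup' univ_nonempty (fun x : S × A × S => |M0.r x.1 x.2.1 x.2.2|) with hR
    set V := univ.sup' univ_nonempty (fun s => |v0 s|) with hV
    set Vs := univ.sup' univ_nonempty v0 with hVs
    set Vi := univ.inf' univ_nonempty v0 with hVi
    have hRnn : 0 ≤ R := by
      rw [hR]
      exact le_trans (abs_nonneg _)
        (Finset.le_sup' (fun x : S × A × S => |M0.r x.1 x.2.1 x.2.2|)
          (mem_univ (Classical.arbitrary (S × A × S))))
    have hVb : |v0 s'| ≤ V := by
      rw [hV]; exact Finset.le_sup' (fun s => |v0 s|) (mem_univ s')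
    have hVnn : 0 ≤ V := le_trans (abs_nonneg _) hVb
    have hSI : Vi ≤ Vs := by
      rw [hVi, hVs]
      exact le_trans (Finset.inf'_le v0 (mem_univ s')) (Finset.le_sup' v0 (mem_univ s'))
    have habs : -V ≤ v0 s' := neg_le_of_abs_le hVb
    have hDγ : γ * V ≤ (R + γ * V) / (1 - γ) := by
      rw [le_div_iff₀ hγpos]
      nlinarith [mul_nonneg (mul_nonneg hγ0 hγ0) hVnn]
    have hγv : γ * -V ≤ γ * v0 s' := mul_le_mul_of_nonneg_left habs hγ0
    have hγv' : -(γ * V) ≤ γ * v0 s' := by linarith [hγv]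
    linarith
  -- Direction 2 : vβ ≤ v0 on Ωβ
  have dir2 : ∀ s ∈ Ωβ, vβ s ≤ v0 s := by
    by_contra hcon
    push_neg at hcon
    obtain ⟨t, ht, htlt⟩ := hcon
    set δ := Ωβ.sup' hne (fun s => vβ s - v0 s) with hδdef
    have hδpos : 0 < δ := by
      have : vβ t - v0 t ≤ δ := Finset.le_sup' (fun s => vβ s - v0 s) ht
      linarith
    obtain ⟨s₂, hs₂, hs₂eq⟩ := Finset.exists_mem_eq_sup' hne (fun s => vβ s - v0 s)
    obtain ⟨a, ha, haeq⟩ := Finset.exists_mem_eq_sup' (Pβ.act_nonempty s₂) (Pβ.Q γ vβ s₂)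
    have ha0 : a ∈ M0.act s₂ := by rw [← hact]; exact ha
    have key : Pβ.Q γ vβ s₂ a ≤ M0.Q γ v0 s₂ a + γ * δ := by
      unfold MDP.Q
      have hsum : γ * δ = ∑ s', M0.p s₂ a s' * (γ * δ) := by
        rw [← Finset.sum_mul, M0.p_sum_one, one_mul]
      rw [hsum, ← Finset.sum_add_distrib]
      apply Finset.sum_le_sum
      intro s' _
      rw [hp_in s₂ hs₂]
      have hp := M0.p_nonneg s₂ a s'
      by_cases h' : s' ∈ Ωβ
      · rw [hr_in s₂ hs₂ a s' h']
        have hb : vβ s' - v0 s' ≤ δ := Finset.le_sup' (fun s => vβ s - v0 s) h'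
        nlinarith [mul_le_mul_of_nonneg_left hb (mul_nonneg hp hγ0)]
      · rw [hr_exit s₂ hs₂ a s' h', hvβ0 s' h']
        have := hMpos s'
        nlinarith [mul_nonneg hp this.le, mul_nonneg hp (mul_nonneg hγ0 hδpos.le)]
    have hQle : M0.Q γ v0 s₂ a ≤ v0 s₂ := by
      have := Finset.le_sup' (M0.Q γ v0 s₂) ha0
      rw [hv0 s₂]; exact this
    have hvs₂ : vβ s₂ = Pβ.Q γ vβ s₂ a := by rw [hvβ s₂]; exact haeq
    have hδle : δ ≤ γ * δ := by
      have : vβ s₂ - v0 s₂ ≤ γ * δ := by linarith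
      rw [← hs₂eq] at this; exact this
    nlinarith
  exact le_antisymm (dir2 s0 hs0) (dir1 s0 hs0)
end

section
/- Let P₀ = (S, A, p, r) be a finite MDP with discount γ ∈ [0,1), and let Ω_α, Ω_β be disjoint subsets of S such that every trajectory of an optimal policy of P₀ starting in Ω_α transitions to Ω_β without entering S ∖ (Ω_α ∪ Ω_β), and never leaves Ω_β once there. Let v_β* denote the optimal value function of P₀ restricted to Ω_β (equal to v₀* on Ω_β). Define the restricted MDP P_α on Ω_α (with added absorbing boundary states), where a transition from s ∈ Ω_α to s' ∈ Ω_β receives reward r(s,s',a) + γ v_β*(s'), transitions from Ω_α to states outside Ω_α ∪ Ω_β receive a large negative penalty, and boundary states are absorbing with zero reward. Then the optimal value function of P_α agrees with that of P₀ on Ω_α: v_α*(s) = v₀*(s) for all s ∈ Ω_α. -/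
open Finset

variable {S A : Type} [Fintype S]

lemma abs_sup'_sub_sup'_le {A : Type} (t : Finset A) (ht : t.Nonempty)
    (f g : A → ℝ) (c : ℝ) (h : ∀ a ∈ t, |f a - g a| ≤ c) :
    |t.sup' ht f - t.sup' ht g| ≤ c := by
  rw [abs_sub_le_iff]
  constructor
  · rw [sub_le_iff_le_add]
    apply Finset.sup'_le
    intro a ha
    have h1 := (abs_sub_le_iff.mp (h a ha)).1
    calc f a ≤ c + g a := by linarith
    _ ≤ c + t.sup' ht g := by gcongr; exact Finset.le_sup' g ha
  · rw [sub_le_iff_le_add]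
    apply Finset.sup'_le
    intro a ha
    have h1 := (abs_sub_le_iff.mp (h a ha)).2
    calc g a ≤ c + f a := by linarith
    _ ≤ c + t.sup' ht f := by gcongr; exact Finset.le_sup' f ha

lemma Q_lipschitz (M : MDP S A) (γ : ℝ) (hγ0 : 0 ≤ γ) (v w : S → ℝ) (c : ℝ)
    (hc : ∀ s, |v s - w s| ≤ c) (s : S) (a : A) :
    |M.Q γ v s a - M.Q γ w s a| ≤ γ * c := by
  have heq : M.Q γ v s a - M.Q γ w s a = ∑ s', M.p s a s' * (γ * (v s' - w s')) := by
    unfold MDP.Q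
    rw [← Finset.sum_sub_distrib]
    congr 1; ext s'; ring
  rw [heq]
  calc |∑ s', M.p s a s' * (γ * (v s' - w s'))|
      ≤ ∑ s', |M.p s a s' * (γ * (v s' - w s'))| := Finset.abs_sum_le_sum_abs _ _
    _ ≤ ∑ s', M.p s a s' * (γ * c) := by
        apply Finset.sum_le_sum
        intro s' _
        rw [abs_mul, abs_of_nonneg (M.p_nonneg s a s'), abs_mul, abs_of_nonneg hγ0]
        exact mul_le_mul_of_nonneg_left (mul_le_mul_of_nonneg_left (hc s') hγ0) (M.p_nonneg s a s')
    _ = γ * c := by rw [← Finset.sum_mul, M.p_sum_one, one_mul]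

lemma fixed_point_unique [Nonempty S] (M : MDP S A) (γ : ℝ) (hγ0 : 0 ≤ γ) (hγ1 : γ < 1)
    (v w : S → ℝ) (hv : ∀ s, v s = M.T γ v s) (hw : ∀ s, w s = M.T γ w s) :
    v = w := by
  set d := univ.sup' univ_nonempty (fun s => |v s - w s|) with hd
  have hdle : ∀ s, |v s - w s| ≤ d := fun s => Finset.le_sup' (fun s => |v s - w s|) (mem_univ s)
  have key : ∀ s, |v s - w s| ≤ γ * d := by
    intro s
    rw [hv s, hw s]
    exact abs_sup'_sub_sup'_le _ _ _ _ _ (fun a _ => Q_lipschitz M γ hγ0 v w d hdle s a)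
  have hdγ : d ≤ γ * d := Finset.sup'_le _ _ (fun s _ => key s)
  have hd0 : 0 ≤ d := (abs_nonneg _).trans (hdle (Classical.arbitrary S))
  have : d ≤ 0 := by nlinarith
  funext s
  have h1 := hdle s
  have := abs_nonneg (v s - w s)
  have : |v s - w s| = 0 := le_antisymm (h1.trans ‹d ≤ 0›) (abs_nonneg _)
  have := abs_eq_zero.mp this
  linarith [sub_eq_zero.mp this]

/-- restricting an MDP to `Ωα` and rewarding transitions into `Ωβ`
with the (discounted) optimal value of the subsequent region yields the optimal
value function of the original MDP on `Ωα`. -/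
theorem restriction_value_agrees_alpha [Fintype A] [Nonempty S] [Nonempty A]
    (M0 : MDP S A) (γ : ℝ) (hγ0 : 0 ≤ γ) (hγ1 : γ < 1)
    (v0 : S → ℝ) (hv0 : ∀ s, v0 s = M0.T γ v0 s)
    (Ωα Ωβ : Finset S) (hdisj : Disjoint Ωα Ωβ)
    -- an optimal policy of the original MDP
    (πstar : S → A) (hπ : M0.IsPolicy πstar)
    (hopt : ∀ s, v0 s = M0.Q γ v0 s (πstar s))
    -- once in Ωβ it never leaves Ωβ
    (hclosedβ : ∀ s ∈ Ωβ, ∀ s' ∉ Ωβ, M0.p s (πstar s) s' = 0)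
    -- from Ωα it transitions to Ωβ without entering S ∖ (Ωα ∪ Ωβ)
    (hclosedα : ∀ s ∈ Ωα, ∀ s', s' ∉ Ωα → s' ∉ Ωβ → M0.p s (πstar s) s' = 0)
    -- from every state of Ωα some policy achieves this
    (hstay : ∃ σ : S → A, M0.IsPolicy σ ∧
      ∀ s ∈ Ωα, ∀ s', s' ∉ Ωα → s' ∉ Ωβ → M0.p s (σ s) s' = 0)
    -- v_β^* : the optimal value function of the subsequent region (= v0 on Ωβ)
    (vβstar : S → ℝ) (hvβstar : ∀ s ∈ Ωβ, vβstar s = v0 s)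
    -- a sufficiently large penalty
    (M : ℝ)
    (hM : (univ.sup' univ_nonempty (fun x : S × A × S => |M0.r x.1 x.2.1 x.2.2|) +
             γ * univ.sup' univ_nonempty (fun s => |v0 s|)) / (1 - γ) +
            univ.sup' univ_nonempty v0 - univ.inf' univ_nonempty v0 < M)
    -- the restricted MDP Pα
    (Pα : MDP S A)
    (hact : ∀ s, Pα.act s = M0.act s)
    (hp_in : ∀ s ∈ Ωα, ∀ (a : A) (s' : S), Pα.p s a s' = M0.p s a s')
    (hp_abs : ∀ s ∉ Ωα, ∀ a : A, Pα.p s a s = 1)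
    (hr_in : ∀ s ∈ Ωα, ∀ a : A, ∀ s' ∈ Ωα, Pα.r s a s' = M0.r s a s')
    (hr_toβ : ∀ s ∈ Ωα, ∀ a : A, ∀ s' ∈ Ωβ, Pα.r s a s' = M0.r s a s' + γ * vβstar s')
    (hr_exit : ∀ s ∈ Ωα, ∀ a : A, ∀ s', s' ∉ Ωα → s' ∉ Ωβ → Pα.r s a s' = M0.r s a s' - M)
    (hr_abs : ∀ s ∉ Ωα, ∀ (a : A) (s' : S), Pα.r s a s' = 0)
    (vα : S → ℝ) (hvα : ∀ s, vα s = Pα.T γ vα s) :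
    ∀ s ∈ Ωα, vα s = v0 s := by
  classical
  set R := univ.sup' univ_nonempty (fun x : S × A × S => |M0.r x.1 x.2.1 x.2.2|) with hRdef
  set V := univ.sup' univ_nonempty (fun s => |v0 s|) with hVdef
  have hR0 : 0 ≤ R := le_trans (abs_nonneg _)
    (Finset.le_sup' (fun x : S × A × S => |M0.r x.1 x.2.1 x.2.2|) (mem_univ (Classical.arbitrary _)))
  have hV0 : 0 ≤ V := le_trans (abs_nonneg _)
    (Finset.le_sup' (fun s => |v0 s|) (mem_univ (Classical.arbitrary S)))
  have hsi : univ.inf' univ_nonempty v0 ≤ univ.sup' univ_nonempty v0 :=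
    le_trans (Finset.inf'_le v0 (mem_univ (Classical.arbitrary S)))
      (Finset.le_sup' v0 (mem_univ (Classical.arbitrary S)))
  have hdiv : γ * V ≤ (R + γ * V) / (1 - γ) := by
    rw [le_div_iff₀ (by linarith)]; nlinarith [mul_nonneg (mul_nonneg hγ0 hγ0) hV0, mul_nonneg hγ0 hV0]
  have hMV : γ * V ≤ M := by linarith
  set w : S → ℝ := fun s => if s ∈ Ωα then v0 s else 0 with hw
  have habs : ∀ s ∉ Ωα, ∀ (a : A), ∀ s', s' ≠ s → Pα.p s a s' = 0 := by
    intro s hs a s' hne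
    have hsum := Pα.p_sum_one s a
    have h2 : Pα.p s a s + ∑ x ∈ univ.erase s, Pα.p s a x = 1 := by
      rw [Finset.add_sum_erase _ _ (mem_univ s)]; exact hsum
    have hrest : ∑ x ∈ univ.erase s, Pα.p s a x = 0 := by
      rw [hp_abs s hs a] at h2; linarith
    exact (Finset.sum_eq_zero_iff_of_nonneg (fun x _ => Pα.p_nonneg s a x)).mp hrest s'
      (Finset.mem_erase.mpr ⟨hne, mem_univ s'⟩)
  have hwfix : ∀ s, w s = Pα.T γ w s := by
    intro s
    by_cases hs : s ∈ Ωα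
    · have hQle : ∀ a, Pα.Q γ w s a ≤ M0.Q γ v0 s a := by
        intro a
        unfold MDP.Q
        apply Finset.sum_le_sum
        intro s' _
        rw [hp_in s hs a s']
        by_cases h1 : s' ∈ Ωα
        · rw [hr_in s hs a s' h1]
          simp [hw, h1]
        · by_cases h2 : s' ∈ Ωβ
          · rw [hr_toβ s hs a s' h2, hvβstar s' h2]
            have hw' : w s' = 0 := by simp [hw, h1]
            rw [hw']; ring_nf; exact le_refl _
          · rw [hr_exit s hs a s' h1 h2]
            have hw' : w s' = 0 := by simp [hw, h1]
            rw [hw']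
            have hb : |v0 s'| ≤ V := Finset.le_sup' (fun s => |v0 s|) (mem_univ s')
            have hb2 := abs_le.mp hb
            have hkey : M0.r s a s' - M + γ * 0 ≤ M0.r s a s' + γ * v0 s' := by nlinarith
            exact mul_le_mul_of_nonneg_left hkey (M0.p_nonneg s a s')
      have hQeq : Pα.Q γ w s (πstar s) = M0.Q γ v0 s (πstar s) := by
        unfold MDP.Q
        apply Finset.sum_congr rfl
        intro s' _
        rw [hp_in s hs _ s']
        by_cases h1 : s' ∈ Ωα
        · rw [hr_in s hs _ s' h1]; simp [hw, h1]
        · by_cases h2 : s' ∈ Ωβ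
          · rw [hr_toβ s hs _ s' h2, hvβstar s' h2]
            have hw' : w s' = 0 := by simp [hw, h1]
            rw [hw']; ring
          · rw [hclosedα s hs s' h1 h2]; ring
      have hle : Pα.T γ w s ≤ v0 s := by
        unfold MDP.T
        apply Finset.sup'_le
        intro a ha
        refine (hQle a).trans ?_
        rw [hv0 s]
        exact Finset.le_sup' (M0.Q γ v0 s) (by rwa [hact s] at ha)
      have hge : v0 s ≤ Pα.T γ w s := by
        rw [hopt s, ← hQeq]
        exact Finset.le_sup' (Pα.Q γ w s) (by rw [hact s]; exact hπ s)
      have hws : w s = v0 s := by simp [hw, hs]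
      rw [hws]; exact le_antisymm hge hle
    · have hTabs : ∀ a, Pα.Q γ w s a = γ * w s := by
        intro a
        unfold MDP.Q
        rw [Finset.sum_eq_single s]
        · rw [hp_abs s hs a, hr_abs s hs a s]; ring
        · intro b _ hb; rw [habs s hs a b hb]; ring
        · intro h; exact absurd (mem_univ s) h
      have hT : Pα.T γ w s = γ * w s := by
        unfold MDP.T
        apply le_antisymm
        · exact Finset.sup'_le _ _ (fun a _ => le_of_eq (hTabs a))
        · obtain ⟨a, ha⟩ := Pα.act_nonempty s
          exact le_trans (le_of_eq (hTabs a).symm) (Finset.le_sup' (Pα.Q γ w s) ha)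
      rw [hT]
      have hws : w s = 0 := by simp [hw, hs]
      rw [hws]; ring
  have heq := fixed_point_unique Pα γ hγ0 hγ1 vα w hvα hwfix
  intro s hs
  rw [congrFun heq s]
  simp [hw, hs]
end

section
/- Let P₀ be a finite MDP with discount γ ∈ [0,1) whose state space is partitioned into Ω₁, …, Ω_n ordered so that optimal-policy transitions never move to a strictly lower index, with the optimal value finite everywhere. Define value functions v_n, v_{n−1}, …, v₁ recursively: v_n is the optimal value function of the restriction of P₀ to Ω_n (with heavy penalty for leaving), and for i < n, v_i is the optimal value function of the restriction of P₀ to Ω_i using as boundary reward v₊(s') = γ v_j(s') for s' ∈ Ω_j with j > i (and heavy penalty for transitions to lower-indexed regions). Then for every i, v_i agrees with the optimal value function v₀* of P₀ on Ω_i. -/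
open Finset

variable {S A : Type} [Fintype S]

lemma abs_sup'_le {t : Finset A} (ht : t.Nonempty) (f : A → ℝ) {c : ℝ}
    (h : ∀ a ∈ t, |f a| ≤ c) : |t.sup' ht f| ≤ c := by
  rw [abs_le]
  obtain ⟨a0, ha0⟩ := ht
  constructor
  · exact le_trans (abs_le.mp (h a0 ha0)).1 (Finset.le_sup' f ha0)
  · exact Finset.sup'_le _ _ fun a ha => le_trans (le_abs_self _) (h a ha)

lemma MDP.abs_Q_sub (M : MDP S A) {γ : ℝ} (hγ0 : 0 ≤ γ) (v w : S → ℝ) (s : S) (a : A)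
    {D : ℝ} (hD : ∀ s', |v s' - w s'| ≤ D) : |M.Q γ v s a - M.Q γ w s a| ≤ γ * D := by
  have h : M.Q γ v s a - M.Q γ w s a = ∑ s', M.p s a s' * (γ * (v s' - w s')) := by
    unfold MDP.Q
    rw [← Finset.sum_sub_distrib]
    exact Finset.sum_congr rfl fun s' _ => by ring
  rw [h]
  calc |∑ s', M.p s a s' * (γ * (v s' - w s'))|
      ≤ ∑ s', |M.p s a s' * (γ * (v s' - w s'))| := Finset.abs_sum_le_sum_abs _ _
    _ ≤ ∑ s', M.p s a s' * (γ * D) := by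
        apply Finset.sum_le_sum; intro s' _
        rw [abs_mul, abs_of_nonneg (M.p_nonneg s a s'), abs_mul, abs_of_nonneg hγ0]
        exact mul_le_mul_of_nonneg_left
          (mul_le_mul_of_nonneg_left (hD s') hγ0) (M.p_nonneg s a s')
    _ = γ * D := by rw [← Finset.sum_mul, M.p_sum_one]; ring

lemma MDP.abs_T_sub (M : MDP S A) {γ : ℝ} (hγ0 : 0 ≤ γ) (v w : S → ℝ) (s : S)
    {D : ℝ} (hD : ∀ s', |v s' - w s'| ≤ D) : |M.T γ v s - M.T γ w s| ≤ γ * D := by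
  rw [abs_sub_le_iff]
  constructor <;> rw [sub_le_iff_le_add] <;> apply Finset.sup'_le <;> intro a ha
  · have h := abs_le.mp (M.abs_Q_sub hγ0 v w s a hD)
    have : M.Q γ v s a ≤ M.Q γ w s a + γ * D := by linarith [h.2]
    refine le_trans this ?_
    unfold MDP.T
    linarith [Finset.le_sup' (M.Q γ w s) ha]
  · have h := abs_le.mp (M.abs_Q_sub hγ0 v w s a hD)
    have : M.Q γ w s a ≤ M.Q γ v s a + γ * D := by linarith [h.1]
    refine le_trans this ?_
    unfold MDP.T
    linarith [Finset.le_sup' (M.Q γ v s) ha]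

lemma MDP.fixed_unique [Nonempty S] (M : MDP S A) {γ : ℝ} (hγ0 : 0 ≤ γ) (hγ1 : γ < 1)
    (v w : S → ℝ) (hv : ∀ s, v s = M.T γ v s) (hw : ∀ s, w s = M.T γ w s) :
    ∀ s, v s = w s := by
  set D := univ.sup' univ_nonempty (fun s => |v s - w s|) with hDdef
  have hD : ∀ s', |v s' - w s'| ≤ D := fun s' => Finset.le_sup' (fun s => |v s - w s|) (mem_univ s')
  have h1 : ∀ s, |v s - w s| ≤ γ * D := fun s => by
    rw [hv s, hw s]; exact M.abs_T_sub hγ0 v w s hD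
  have hDle : D ≤ γ * D := Finset.sup'_le _ _ fun s _ => h1 s
  have hD0 : 0 ≤ D := le_trans (abs_nonneg _) (hD (Classical.arbitrary S))
  have hDz : D ≤ 0 := by nlinarith
  intro s
  have h2 : |v s - w s| = 0 := le_antisymm (le_trans (hD s) hDz) (abs_nonneg _)
  have := abs_eq_zero.mp h2
  linarith

/-- recursive application over an index-ordered partition
`Ω 0, …, Ω (n-1)`: each recursively restricted optimal value function `vfun i`
(boundary reward `γ • vfun j` towards higher-indexed regions, heavy penalty `-M`
towards lower-indexed regions) agrees with the optimal value function of the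
original MDP on `Ω i`. -/
theorem recursive_restriction_agrees [Fintype A] [Nonempty S] [Nonempty A]
    (M0 : MDP S A) (γ : ℝ) (hγ0 : 0 ≤ γ) (hγ1 : γ < 1)
    (v0 : S → ℝ) (hv0 : ∀ s, v0 s = M0.T γ v0 s)
    (n : ℕ) (Ω : Fin n → Finset S)
    (hdisj : ∀ i j, i ≠ j → Disjoint (Ω i) (Ω j))
    (hcover : ∀ s : S, ∃ i, s ∈ Ω i)
    -- an optimal policy whose transitions never decrease the region index
    (πstar : S → A) (hπ : M0.IsPolicy πstar)
    (hopt : ∀ s, v0 s = M0.Q γ v0 s (πstar s))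
    (hmono : ∀ i j : Fin n, j < i → ∀ s ∈ Ω i, ∀ s' ∈ Ω j, M0.p s (πstar s) s' = 0)
    -- a sufficiently large penalty
    (M : ℝ)
    (hM : (univ.sup' univ_nonempty (fun x : S × A × S => |M0.r x.1 x.2.1 x.2.2|) +
             γ * univ.sup' univ_nonempty (fun s => |v0 s|)) / (1 - γ) +
            univ.sup' univ_nonempty v0 - univ.inf' univ_nonempty v0 < M)
    -- the family of restricted MDPs and their optimal value functions
    (Pfam : Fin n → MDP S A) (vfun : Fin n → S → ℝ)
    (hact : ∀ i s, (Pfam i).act s = M0.act s)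
    (hp_in : ∀ i, ∀ s ∈ Ω i, ∀ (a : A) (s' : S), (Pfam i).p s a s' = M0.p s a s')
    (hp_abs : ∀ i, ∀ s ∉ Ω i, ∀ a : A, (Pfam i).p s a s = 1)
    (hr_in : ∀ i, ∀ s ∈ Ω i, ∀ a : A, ∀ s' ∈ Ω i, (Pfam i).r s a s' = M0.r s a s')
    (hr_up : ∀ i j, i < j → ∀ s ∈ Ω i, ∀ a : A, ∀ s' ∈ Ω j,
      (Pfam i).r s a s' = M0.r s a s' + γ * vfun j s')
    (hr_down : ∀ i j, j < i → ∀ s ∈ Ω i, ∀ a : A, ∀ s' ∈ Ω j,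
      (Pfam i).r s a s' = M0.r s a s' - M)
    (hr_abs : ∀ i, ∀ s ∉ Ω i, ∀ (a : A) (s' : S), (Pfam i).r s a s' = 0)
    (hvfun : ∀ i s, vfun i s = (Pfam i).T γ (vfun i) s) :
    ∀ i, ∀ s ∈ Ω i, vfun i s = v0 s := by
  classical
  -- notation for bounds
  set R := univ.sup' univ_nonempty (fun x : S × A × S => |M0.r x.1 x.2.1 x.2.2|) with hRdef
  set V := univ.sup' univ_nonempty (fun s => |v0 s|) with hVdef
  have hRb : ∀ s a s', |M0.r s a s'| ≤ R := fun s a s' =>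
    Finset.le_sup' (fun x : S × A × S => |M0.r x.1 x.2.1 x.2.2|) (mem_univ (s, a, s'))
  have hVb : ∀ s, |v0 s| ≤ V := fun s => Finset.le_sup' (fun s => |v0 s|) (mem_univ s)
  have hR0 : 0 ≤ R := le_trans (abs_nonneg _)
    (hRb (Classical.arbitrary S) (Classical.arbitrary A) (Classical.arbitrary S))
  have hV0 : 0 ≤ V := le_trans (abs_nonneg _) (hVb (Classical.arbitrary S))
  have hsupinf : univ.inf' univ_nonempty v0 ≤ univ.sup' univ_nonempty v0 :=
    le_trans (Finset.inf'_le v0 (mem_univ (Classical.arbitrary S)))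
      (Finset.le_sup' v0 (mem_univ _))
  have hMpos : ∀ s', 0 ≤ M + γ * v0 s' := by
    intro s'
    have h1 : γ * V ≤ (R + γ * V) / (1 - γ) := by
      rw [le_div_iff₀ (by linarith)]
      nlinarith [mul_nonneg (mul_nonneg hγ0 hγ0) hV0]
    have h2 : γ * |v0 s'| ≤ γ * V := mul_le_mul_of_nonneg_left (hVb s') hγ0
    have h3 : -(γ * v0 s') ≤ γ * |v0 s'| := by
      nlinarith [neg_le_abs (v0 s'), abs_nonneg (v0 s')]
    linarith
  -- downward strong induction on the region index
  suffices key : ∀ m : ℕ, ∀ i : Fin n, n - (i : ℕ) ≤ m → ∀ s ∈ Ω i, vfun i s = v0 s by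
    intro i
    exact key n i (Nat.sub_le _ _)
  intro m
  induction m with
  | zero => intro i hi; exact absurd hi (by have := i.isLt; omega)
  | succ m ih =>
    intro i hi
    have IH : ∀ j : Fin n, i < j → ∀ s' ∈ Ω j, vfun j s' = v0 s' := by
      intro j hj
      have hj' : (i : ℕ) < (j : ℕ) := hj
      exact ih j (by have := j.isLt; omega)
    set w : S → ℝ := fun t => if t ∈ Ω i then v0 t else 0 with hwdef
    have hnot : ∀ j : Fin n, j ≠ i → ∀ t ∈ Ω j, t ∉ Ω i := fun j hj t ht =>
      Finset.disjoint_left.mp (hdisj j i hj) ht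
    -- w is a fixed point of the restricted Bellman operator
    have hfix : ∀ t, w t = (Pfam i).T γ w t := by
      intro t
      by_cases ht : t ∈ Ω i
      · -- inside the region
        have hterm_eq : ∀ a : A, ∀ j : Fin n, ¬ j < i → ∀ s' ∈ Ω j,
            (Pfam i).r t a s' + γ * w s' = M0.r t a s' + γ * v0 s' := by
          intro a j hj s' hs'
          rcases eq_or_lt_of_le (not_lt.mp hj) with h | h
          · subst h
            rw [hr_in i t ht a s' hs']
            have : w s' = v0 s' := by rw [hwdef]; simp [hs']
            rw [this]
          · rw [hr_up i j h t ht a s' hs']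
            have hw0 : w s' = 0 := by
              rw [hwdef]; simp [hnot j (ne_of_gt h) s' hs']
            rw [hw0, IH j h s' hs']
            ring
        have hterm_le : ∀ a : A, ∀ s' : S,
            (Pfam i).p t a s' * ((Pfam i).r t a s' + γ * w s') ≤
            M0.p t a s' * (M0.r t a s' + γ * v0 s') := by
          intro a s'
          obtain ⟨j, hj⟩ := hcover s'
          rw [hp_in i t ht a s']
          by_cases h : j < i
          · rw [hr_down i j h t ht a s' hj]
            have hw0 : w s' = 0 := by
              rw [hwdef]; simp [hnot j (ne_of_lt h) s' hj]
            rw [hw0]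
            have := hMpos s'
            nlinarith [M0.p_nonneg t a s']
          · rw [hterm_eq a j h s' hj]
        have hQle : ∀ a : A, (Pfam i).Q γ w t a ≤ M0.Q γ v0 t a := by
          intro a
          exact Finset.sum_le_sum fun s' _ => hterm_le a s'
        have hQeq : (Pfam i).Q γ w t (πstar t) = M0.Q γ v0 t (πstar t) := by
          apply Finset.sum_congr rfl
          intro s' _
          obtain ⟨j, hj⟩ := hcover s'
          rw [hp_in i t ht (πstar t) s']
          by_cases h : j < i
          · rw [hmono i j h t ht s' hj]
            ring
          · rw [hterm_eq (πstar t) j h s' hj]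
        have hwt : w t = v0 t := by rw [hwdef]; simp [ht]
        rw [hwt]
        unfold MDP.T
        apply le_antisymm
        · -- v0 t ≤ T w t : use πstar
          have hmem : πstar t ∈ (Pfam i).act t := by rw [hact]; exact hπ t
          have := Finset.le_sup' ((Pfam i).Q γ w t) hmem
          rw [hQeq, ← hopt t] at this
          exact this
        · -- T w t ≤ v0 t
          apply Finset.sup'_le
          intro a ha
          rw [hact] at ha
          have h1 : M0.Q γ v0 t a ≤ M0.T γ v0 t := Finset.le_sup' (M0.Q γ v0 t) ha
          rw [← hv0 t] at h1
          exact le_trans (hQle a) h1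
      · -- outside the region: absorbing with zero reward
        have hwt : w t = 0 := by rw [hwdef]; simp [ht]
        have hQ0 : ∀ a : A, (Pfam i).Q γ w t a = 0 := by
          intro a
          have h1 : (Pfam i).p t a t = 1 := hp_abs i t ht a
          have hsum := (Pfam i).p_sum_one t a
          have herase : ∑ s' ∈ univ.erase t, (Pfam i).p t a s' = 0 := by
            have h2 := Finset.sum_erase_add univ (fun s' => (Pfam i).p t a s') (mem_univ t)
            simp only [h1, hsum] at h2
            linarith
          have hz : ∀ s', s' ≠ t → (Pfam i).p t a s' = 0 := by
            intro s' hne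
            have := (Finset.sum_eq_zero_iff_of_nonneg
              (fun x _ => (Pfam i).p_nonneg t a x)).mp herase s'
              (Finset.mem_erase.mpr ⟨hne, mem_univ s'⟩)
            exact this
          unfold MDP.Q
          rw [Finset.sum_eq_single t (fun s' _ hne => by rw [hz s' hne]; ring)
            (fun h => absurd (mem_univ t) h)]
          rw [h1, hr_abs i t ht a t, hwt]
          ring
        rw [hwt]
        unfold MDP.T
        apply le_antisymm
        · obtain ⟨a0, ha0⟩ := (Pfam i).act_nonempty t
          have := Finset.le_sup' ((Pfam i).Q γ w t) ha0
          rw [hQ0 a0] at this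
          exact this
        · exact Finset.sup'_le _ _ fun a _ => le_of_eq (hQ0 a)
    have heq := (Pfam i).fixed_unique hγ0 hγ1 (vfun i) w (hvfun i) hfix
    intro s hs
    rw [heq s, hwdef]
    simp [hs]
end
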